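/- Let ψ ∈ ℂ² be any single-qubit state and let ℓ ∈ {0, 1, 2, 3}. Then there exist complex numbers z₀, z₁, z₂, z₃, each of absolute value 1, such that the three-qubit vector ψ ⊗ ((I ⊗ σ_ℓ) Φ₀) equals (1/2) · Σ_{k=0}^{3} Φ_k ⊗ (z_k · σ_ℓ σ_k ψ), where in each summand Φ_k occupies the first two tensor factors (registers S and A) and σ_ℓ σ_k ψ occupies the third (register B). Consequently, if a Bell measurement on the first two qubits yields outcome k, the third qubit is left in the state σ_ℓ σ_k ψ up to global phase, which is the correctness of quantum teleportation through the shared entangled state σ_ℓ^B Φ₀. -/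

import Mathlib

noncomputable section

/-- The Pauli matrices `σ₀ = I`, `σ₁ = X`, `σ₂ = Y`, `σ₃ = Z`. -/
def Pauli : Fin 4 → Matrix (Fin 2) (Fin 2) ℂ :=
  ![!![1, 0; 0, 1],
    !![0, 1; 1, 0],
    !![0, -Complex.I; Complex.I, 0],
    !![1, 0; 0, -1]]

/-- The standard basis vector `|ab⟩` of the two-qubit space. -/
def ket (a b : Fin 2) : Fin 2 × Fin 2 → ℂ :=
  fun p => if p = (a, b) then 1 else 0

/-- The four Bell states `Φ₀, Φ₁, Φ₂, Φ₃`. -/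
def BellState : Fin 4 → (Fin 2 × Fin 2 → ℂ) :=
  ![((Real.sqrt 2 : ℂ))⁻¹ • (ket 0 0 + ket 1 1),
    ((Real.sqrt 2 : ℂ))⁻¹ • (ket 0 1 + ket 1 0),
    ((Real.sqrt 2 : ℂ))⁻¹ • (ket 0 1 - ket 1 0),
    ((Real.sqrt 2 : ℂ))⁻¹ • (ket 0 0 - ket 1 1)]

set_option maxHeartbeats 2000000 in
/-- **Correctness of quantum teleportation through the shared entangled state
`σ_ℓ^B Φ₀`.**  For any single-qubit state `ψ` and any `ℓ ∈ {0,1,2,3}` there are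
unimodular phases `z₀, z₁, z₂, z₃` such that
`ψ ⊗ ((I ⊗ σ_ℓ) Φ₀) = (1/2) Σ_k Φ_k ⊗ (z_k • σ_ℓ σ_k ψ)`,
where `Φ_k` occupies the first two tensor factors (registers `S`, `A`) and
`σ_ℓ σ_k ψ` the third (register `B`). -/
theorem stmt_12 (ψ : Fin 2 → ℂ) (ℓ : Fin 4) :
    ∃ z : Fin 4 → ℂ, (∀ k, ‖z k‖ = 1) ∧
      (fun p : Fin 2 × Fin 2 × Fin 2 =>
          ψ p.1 *
            ((Matrix.kroneckerMap (· * ·) (1 : Matrix (Fin 2) (Fin 2) ℂ)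
                (Pauli ℓ)).mulVec (BellState 0)) (p.2.1, p.2.2))
        = (1 / 2 : ℂ) • ∑ k : Fin 4,
            (fun p : Fin 2 × Fin 2 × Fin 2 =>
              BellState k (p.1, p.2.1) *
                (z k • ((Pauli ℓ * Pauli k).mulVec ψ)) p.2.2) := by
  refine ⟨![1, 1, -Complex.I, 1], ?_, ?_⟩
  · intro k; fin_cases k <;> simp
  · funext p
    obtain ⟨a, b, c⟩ := p
    have h2 : ((Real.sqrt 2 : ℂ))⁻¹ ≠ 0 := by
      simp [Real.sqrt_eq_zero']
    fin_cases ℓ <;> fin_cases a <;> fin_cases b <;> fin_cases c <;>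
      ·  simp only [Pauli, BellState, ket, Matrix.mulVec, dotProduct,
           Fintype.sum_prod_type, Fin.sum_univ_two, Fin.sum_univ_four,
           Matrix.kroneckerMap_apply, Matrix.mul_apply, Matrix.one_apply,
           Pi.smul_apply, Pi.add_apply, Pi.sub_apply, smul_eq_mul,
           Matrix.cons_val', Matrix.cons_val_zero, Matrix.cons_val_one,
           Matrix.head_cons, Matrix.head_fin_const, Matrix.empty_val',
           Matrix.cons_val_fin_one, Matrix.of_apply, Finset.sum_apply,
           Pi.mul_apply, Prod.mk.injEq]
         try norm_num
         try ring_nf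
         try simp [Complex.I_sq, Complex.I_mul_I]
         try ring_nf
         try norm_num
         try ring

end
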